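/- There exists a finite constant C such that for all integers L ≥ 1, all ε ∈ (0, 1/2), and all α ∈ ℝ: | (2L+1)^{−3} Σ_{k ∈ Λ_L*} ((e_Δ(k) − α)² + ε²)^{−1/2} − ∫_{[0,1]³} ((e_Δ(k) − α)² + ε²)^{−1/2} dk | ≤ C / (ε² L), where Λ_L* = {j/L : j ∈ ℤ, −L ≤ j ≤ L}³. -/

import Mathlib

open MeasureTheory Real

noncomputable section

/-- The unit cell `[0,1]³` of the torus `𝕋³ = ℝ³/ℤ³`. -/
def cell : Set (Fin 3 → ℝ) := Set.Icc 0 1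

/-- The lattice kinetic energy `e_Δ(k) = Σᵢ (1 − cos(2π kᵢ))`. -/
def eD (k : Fin 3 → ℝ) : ℝ := ∑ i, (1 - Real.cos (2 * π * k i))

/-- The point `k = j/L ∈ Λ_L* = (1/L){−L,…,L}³` indexed by `a ∈ (ℤ/(2L+1)ℤ)³`, using the
representatives `valMinAbs (a i) ∈ {−L,…,L}`. -/
def dualPt (L : ℕ) (a : Fin 3 → ZMod (2*L+1)) : Fin 3 → ℝ :=
  fun i => ((a i).valMinAbs : ℝ) / L

namespace S15

lemma cos_lip (a b : ℝ) : |Real.cos a - Real.cos b| ≤ |a - b| := by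
  rw [Real.cos_sub_cos]
  have h1 := Real.abs_sin_le_one ((a + b) / 2)
  have h2 : |Real.sin ((a - b) / 2)| ≤ |a - b| / 2 := by
    have := Real.abs_sin_le_abs (x := (a - b) / 2)
    rwa [abs_div, abs_two] at this
  rw [abs_mul, abs_mul, abs_neg, abs_two]
  nlinarith [abs_nonneg (Real.sin ((a - b) / 2)), abs_nonneg (a - b),
    abs_nonneg (Real.sin ((a + b) / 2))]

lemma eD_lip (x y : Fin 3 → ℝ) : |eD x - eD y| ≤ 8 * ∑ i, |x i - y i| := by
  unfold eD
  rw [← Finset.sum_sub_distrib, Finset.mul_sum]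
  refine (Finset.abs_sum_le_sum_abs _ _).trans (Finset.sum_le_sum fun i _ => ?_)
  have h : (1 - Real.cos (2*π*x i)) - (1 - Real.cos (2*π*y i))
      = Real.cos (2*π*y i) - Real.cos (2*π*x i) := by ring
  rw [h]
  refine (cos_lip _ _).trans ?_
  have h2 : |2*π*y i - 2*π*x i| = 2*π*|x i - y i| := by
    rw [show 2*π*y i - 2*π*x i = -(2*π*(x i - y i)) by ring, abs_neg, abs_mul,
      abs_of_pos Real.two_pi_pos]
  rw [h2]
  have hπ : π ≤ 4 := Real.pi_le_four
  nlinarith [abs_nonneg (x i - y i)]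

lemma inv_sqrt_lip {ε : ℝ} (hε : 0 < ε) (α x y : ℝ) :
    |(Real.sqrt ((x - α)^2 + ε^2))⁻¹ - (Real.sqrt ((y - α)^2 + ε^2))⁻¹|
      ≤ ε⁻¹ * ε⁻¹ * |x - y| := by
  set A := (x - α)^2 + ε^2 with hAdef
  set B := (y - α)^2 + ε^2 with hBdef
  set sA := Real.sqrt A with hsAdef
  set sB := Real.sqrt B with hsBdef
  have hA0 : (0:ℝ) < A := by positivity
  have hB0 : (0:ℝ) < B := by positivity
  have hsA2 : sA^2 = A := Real.sq_sqrt hA0.le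
  have hsB2 : sB^2 = B := Real.sq_sqrt hB0.le
  have hεA : ε ≤ sA := by
    rw [hsAdef, show ε = Real.sqrt (ε^2) by rw [Real.sqrt_sq hε.le]]
    exact Real.sqrt_le_sqrt (by nlinarith [sq_nonneg (x - α)])
  have hεB : ε ≤ sB := by
    rw [hsBdef, show ε = Real.sqrt (ε^2) by rw [Real.sqrt_sq hε.le]]
    exact Real.sqrt_le_sqrt (by nlinarith [sq_nonneg (y - α)])
  have hsA0 : 0 < sA := lt_of_lt_of_le hε hεA
  have hsB0 : 0 < sB := lt_of_lt_of_le hε hεB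
  have hxA : |x - α| ≤ sA := by
    rw [hsAdef, ← Real.sqrt_sq_eq_abs]
    exact Real.sqrt_le_sqrt (by nlinarith [sq_nonneg ε])
  have hyB : |y - α| ≤ sB := by
    rw [hsBdef, ← Real.sqrt_sq_eq_abs]
    exact Real.sqrt_le_sqrt (by nlinarith [sq_nonneg ε])
  have key : |sB - sA| ≤ |x - y| := by
    have h1 : |sB - sA| * (sB + sA) = |B - A| := by
      rw [← abs_of_pos (show (0:ℝ) < sB + sA by linarith), ← abs_mul]
      congr 1
      nlinarith [hsA2, hsB2]
    have h2 : |B - A| ≤ |x - y| * (sB + sA) := by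
      have hBA : B - A = (y - x) * ((y - α) + (x - α)) := by
        rw [hAdef, hBdef]; ring
      rw [hBA, abs_mul]
      have : |(y - α) + (x - α)| ≤ sB + sA := by
        refine (abs_add_le _ _).trans (by linarith)
      have hyx : |y - x| = |x - y| := abs_sub_comm y x
      rw [hyx]
      exact mul_le_mul_of_nonneg_left this (abs_nonneg _)
    have h3 : |sB - sA| * (sB + sA) ≤ |x - y| * (sB + sA) := by
      rw [h1]; exact h2
    exact le_of_mul_le_mul_right h3 (by linarith)
  have hfin : |sA⁻¹ - sB⁻¹| = |sB - sA| / (sA * sB) := by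
    rw [inv_sub_inv hsA0.ne' hsB0.ne', abs_div, abs_of_pos (mul_pos hsA0 hsB0)]
  rw [hfin]
  have hεε : ε * ε ≤ sA * sB := mul_le_mul hεA hεB hε.le hsA0.le
  calc |sB - sA| / (sA * sB) ≤ |x - y| / (ε * ε) := by
        exact div_le_div₀ (abs_nonneg _) key (mul_pos hε hε) hεε
    _ = ε⁻¹ * ε⁻¹ * |x - y| := by rw [div_eq_mul_inv, mul_inv]; ring

lemma f_cont {ε α : ℝ} (hε : 0 < ε) :
    Continuous (fun k : Fin 3 → ℝ => (Real.sqrt ((eD k - α)^2 + ε^2))⁻¹) := by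
  have heD : Continuous eD := by
    unfold eD
    exact continuous_finset_sum _ fun i _ =>
      continuous_const.sub (Real.continuous_cos.comp (continuous_const.mul (continuous_apply i)))
  have hin : Continuous fun k : Fin 3 → ℝ => (eD k - α)^2 + ε^2 :=
    ((heD.sub continuous_const).pow 2).add continuous_const
  refine (Real.continuous_sqrt.comp hin).inv₀ fun k => ?_
  exact (Real.sqrt_pos.2 (by positivity)).ne'

lemma eD_add_int (x : Fin 3 → ℝ) (m : Fin 3 → ℤ) :
    eD (x + fun i => (m i : ℝ)) = eD x := by
  unfold eD
  refine Finset.sum_congr rfl fun i _ => ?_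
  have h : 2 * π * ((x + fun i => (m i : ℝ)) i) = 2 * π * x i + (m i : ℝ) * (2 * π) := by
    simp only [Pi.add_apply]; ring
  rw [h, Real.cos_add_int_mul_two_pi]

lemma shift_integral (g : (Fin 3 → ℝ) → ℝ) (v a b : Fin 3 → ℝ) :
    ∫ x in Set.Icc (a + v) (b + v), g x = ∫ x in Set.Icc a b, g (x + v) := by
  have hmp : MeasurePreserving (· + v) (volume : Measure (Fin 3 → ℝ)) volume :=
    measurePreserving_add_right volume v
  have hemb : MeasurableEmbedding (· + v) :=
    (MeasurableEquiv.addRight v).measurableEmbedding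
  have hpre : (· + v) ⁻¹' Set.Icc (a + v) (b + v) = Set.Icc a b := by
    ext x
    simp only [Set.mem_preimage, Set.mem_Icc, Pi.le_def, Pi.add_apply]
    constructor
    · exact fun h => ⟨fun i => by linarith [(h.1 i), (h.2 i)], fun i => by linarith [(h.2 i)]⟩
    · exact fun h => ⟨fun i => by linarith [(h.1 i)], fun i => by linarith [(h.2 i)]⟩
  calc ∫ x in Set.Icc (a + v) (b + v), g x
      = ∫ x in (· + v) ⁻¹' Set.Icc (a + v) (b + v), g (x + v) :=
        (hmp.setIntegral_preimage_emb hemb g _).symm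
    _ = ∫ x in Set.Icc a b, g (x + v) := by rw [hpre]

lemma int_neg_one_one (g : (Fin 3 → ℝ) → ℝ) (hg : Continuous g)
    (hper : ∀ (x : Fin 3 → ℝ) (m : Fin 3 → ℤ), g (x + fun i => (m i : ℝ)) = g x) :
    ∫ x in Set.Icc (fun _ => (-1:ℝ)) (fun _ => (1:ℝ)), g x
      = 8 * ∫ x in Set.Icc (0 : Fin 3 → ℝ) 1, g x := by
  set c : (Fin 3 → Bool) → (Fin 3 → ℝ) := fun σ i => if σ i then -1 else 0 with hc
  set T : (Fin 3 → Bool) → Set (Fin 3 → ℝ) := fun σ => Set.Icc (c σ) (c σ + 1) with hT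
  have hunion : ⋃ σ, T σ = Set.Icc (fun _ => (-1:ℝ)) (fun _ => (1:ℝ)) := by
    ext x
    simp only [Set.mem_iUnion, hT, Set.mem_Icc, Pi.le_def, Pi.add_apply, Pi.one_apply]
    constructor
    · rintro ⟨σ, h1, h2⟩
      constructor
      · intro i
        have := h1 i
        by_cases hσ : σ i <;> simp [hc, hσ] at this ⊢ <;> linarith
      · intro i
        have := h2 i
        by_cases hσ : σ i <;> simp [hc, hσ] at this ⊢ <;> linarith
    · rintro ⟨h1, h2⟩
      refine ⟨fun i => decide (x i < 0), fun i => ?_, fun i => ?_⟩ <;>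
        by_cases hx : x i < 0 <;> simp [hc, hx] <;> linarith [h1 i, h2 i]
  have hdisj : Pairwise (Function.onFun (AEDisjoint volume) T) := by
    intro σ τ hστ
    obtain ⟨i₀, hi₀⟩ : ∃ i, σ i ≠ τ i := by
      by_contra h
      push_neg at h
      exact hστ (funext h)
    show volume (T σ ∩ T τ) = 0
    rw [hT]
    simp only
    rw [Set.Icc_inter_Icc, Real.volume_Icc_pi]
    refine Finset.prod_eq_zero (Finset.mem_univ i₀) ?_
    rw [ENNReal.ofReal_eq_zero]
    have : (c σ + 1) ⊓ (c τ + 1) = fun i => min (c σ i + 1) (c τ i + 1) := rfl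
    have h2 : (c σ ⊔ c τ) = fun i => max (c σ i) (c τ i) := rfl
    rw [this, h2]
    have hv : c σ i₀ = 0 ∧ c τ i₀ = -1 ∨ c σ i₀ = -1 ∧ c τ i₀ = 0 := by
      cases hσ : σ i₀ <;> cases hτ : τ i₀
      · exact absurd (hσ.trans hτ.symm) hi₀
      · exact Or.inl ⟨by simp [hc, hσ], by simp [hc, hτ]⟩
      · exact Or.inr ⟨by simp [hc, hσ], by simp [hc, hτ]⟩
      · exact absurd (hσ.trans hτ.symm) hi₀
    rcases hv with ⟨h1, h2'⟩ | ⟨h1, h2'⟩ <;> simp only [h1, h2'] <;>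
      norm_num [min_def, max_def]
  have hint : IntegrableOn g (Set.Icc (fun _ => (-1:ℝ)) (fun _ => (1:ℝ))) volume :=
    hg.continuousOn.integrableOn_compact isCompact_Icc
  have hsum : ∫ x in Set.Icc (fun _ => (-1:ℝ)) (fun _ => (1:ℝ)), g x
      = ∑ σ : Fin 3 → Bool, ∫ x in T σ, g x := by
    rw [← hunion, integral_iUnion_ae (fun σ => measurableSet_Icc.nullMeasurableSet) hdisj
      (hunion ▸ hint), tsum_fintype]
  have hTσ : ∀ σ, ∫ x in T σ, g x = ∫ x in Set.Icc (0 : Fin 3 → ℝ) 1, g x := by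
    intro σ
    have hTσ' : T σ = Set.Icc ((0 : Fin 3 → ℝ) + c σ) ((1 : Fin 3 → ℝ) + c σ) := by
      rw [hT]; simp only; rw [zero_add, add_comm]
    rw [hTσ', shift_integral]
    refine setIntegral_congr_fun measurableSet_Icc fun x _ => ?_
    have : c σ = fun i => (((fun i => if σ i then (-1:ℤ) else 0) i : ℤ) : ℝ) := by
      funext i; by_cases hσ : σ i <;> simp [hc, hσ]
    rw [this, hper]
  rw [hsum, Finset.sum_congr rfl (fun σ _ => hTσ σ), Finset.sum_const, Finset.card_univ]
  have : Fintype.card (Fin 3 → Bool) = 8 := by simp [Fintype.card_fun]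
  rw [this, nsmul_eq_mul]
  norm_num

end S15

open S15

/-- There is a finite constant `C` such that for all integers `L ≥ 1`, all `ε ∈ (0,1/2)` and
all `α ∈ ℝ`, the Riemann sum of `((e_Δ(k)−α)²+ε²)^{−1/2}` over `Λ_L* = (1/L){−L,…,L}³`
(normalized by `(2L+1)^{−3}`) differs from `∫_{[0,1]³} ((e_Δ(k)−α)²+ε²)^{−1/2} dk` by at
most `C/(ε² L)`. -/
theorem statement15 :
    ∃ C : ℝ, ∀ L : ℕ, 1 ≤ L → ∀ ε : ℝ, 0 < ε → ε < 1/2 → ∀ α : ℝ,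
      |((2*(L:ℝ)+1)^3)⁻¹ *
          (∑ a : Fin 3 → ZMod (2*L+1), (Real.sqrt ((eD (dualPt L a) - α)^2 + ε^2))⁻¹)
        - ∫ k in cell, (Real.sqrt ((eD k - α)^2 + ε^2))⁻¹| ≤ C / (ε^2 * L) := by
  refine ⟨24, fun L hL ε hε hε2 α => ?_⟩
  have hL0 : (0:ℝ) < L := by exact_mod_cast hL
  set nR : ℝ := 2*(L:ℝ)+1 with hnR
  have hnR0 : (0:ℝ) < nR := by rw [hnR]; linarith
  set f : (Fin 3 → ℝ) → ℝ := fun k => (Real.sqrt ((eD k - α)^2 + ε^2))⁻¹ with hf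
  set D : ℝ := ε⁻¹ * ε⁻¹ * (8 * (3 / L)) with hD
  -- bounds for valMinAbs
  have hJb : ∀ z : ZMod (2*L+1), -(L:ℝ) ≤ (z.valMinAbs : ℝ) ∧ (z.valMinAbs : ℝ) ≤ L := by
    intro z
    have h1 : z.valMinAbs.natAbs ≤ (2*L+1)/2 := ZMod.natAbs_valMinAbs_le z
    have h2 : (2*L+1)/2 = L := by omega
    rw [h2] at h1
    have h3 : |z.valMinAbs| ≤ (L:ℤ) := by
      rw [Int.abs_eq_natAbs]; exact_mod_cast h1
    have h4 := abs_le.1 h3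
    constructor <;> [exact_mod_cast h4.1; exact_mod_cast h4.2]
  -- the cubes
  set Q : (Fin 3 → ZMod (2*L+1)) → Set (Fin 3 → ℝ) := fun a =>
    Set.Icc (fun i => (2*(((a i).valMinAbs : ℤ):ℝ) - 1)/nR)
            (fun i => (2*(((a i).valMinAbs : ℤ):ℝ) + 1)/nR) with hQ
  have hQle : ∀ a : Fin 3 → ZMod (2*L+1),
      (fun i => (2*(((a i).valMinAbs : ℤ):ℝ) - 1)/nR)
        ≤ (fun i => (2*(((a i).valMinAbs : ℤ):ℝ) + 1)/nR) := by
    intro a i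
    have h : (2*(((a i).valMinAbs : ℤ):ℝ) - 1) ≤ (2*(((a i).valMinAbs : ℤ):ℝ) + 1) := by
      linarith
    exact div_le_div_of_nonneg_right h hnR0.le
  -- volume of the cubes
  have hQvol : ∀ a, (volume (Q a)).toReal = (2/nR)^3 := by
    intro a
    rw [hQ]
    rw [Real.volume_Icc_pi_toReal (hQle a)]
    have : ∀ i : Fin 3, (2*(((a i).valMinAbs : ℤ):ℝ) + 1)/nR
        - (2*(((a i).valMinAbs : ℤ):ℝ) - 1)/nR = 2/nR := by
      intro i
      rw [div_sub_div_same (2*(((a i).valMinAbs : ℤ):ℝ) + 1)]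
      ring_nf
    rw [Finset.prod_congr rfl (fun i _ => this i), Finset.prod_const, Finset.card_univ]
    simp
  -- the union of the cubes is [-1,1]^3
  have hUnion : ⋃ a, Q a = Set.Icc (fun _ => (-1:ℝ)) (fun _ => (1:ℝ)) := by
    ext x
    simp only [Set.mem_iUnion, hQ, Set.mem_Icc, Pi.le_def]
    constructor
    · rintro ⟨a, h1, h2⟩
      constructor
      · intro i
        have hx := h1 i
        have hb := (hJb (a i)).1
        have h3 : (-1:ℝ) ≤ (2*(((a i).valMinAbs : ℤ):ℝ) - 1)/nR := by
          rw [le_div_iff₀ hnR0, hnR]; nlinarith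
        linarith
      · intro i
        have hx := h2 i
        have hb := (hJb (a i)).2
        have h3 : (2*(((a i).valMinAbs : ℤ):ℝ) + 1)/nR ≤ 1 := by
          rw [div_le_iff₀ hnR0, hnR]; nlinarith
        linarith
    · rintro ⟨h1, h2⟩
      -- choose the integer z i = max (-L) ⌈(nR * x i - 1)/2⌉
      obtain ⟨z, hz⟩ : ∃ z : Fin 3 → ℤ, z = fun i => max (-(L:ℤ)) ⌈(nR * x i - 1)/2⌉ :=
        ⟨_, rfl⟩
      have hzge : ∀ i, -(L:ℤ) ≤ z i := fun i => by rw [hz]; exact le_max_left _ _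
      have hzle : ∀ i, z i ≤ (L:ℤ) := by
        intro i
        rw [hz]
        refine max_le (by omega) (Int.ceil_le.2 ?_)
        push_cast
        have := h2 i
        rw [hnR]
        nlinarith
      have hzup : ∀ i, nR * x i - 1 ≤ 2 * (z i : ℝ) := by
        intro i
        have hc : ((⌈(nR * x i - 1)/2⌉ : ℤ) : ℝ) ≤ (z i : ℝ) := by
          rw [hz]; exact_mod_cast le_max_right _ _
        have h5 := Int.le_ceil ((nR * x i - 1)/2)
        have h6 : (nR * x i - 1)/2 ≤ ((z i : ℤ) : ℝ) := le_trans h5 hc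
        calc nR * x i - 1 = 2 * ((nR * x i - 1)/2) := by ring
          _ ≤ 2 * (z i : ℝ) := by linarith
      have hzlo : ∀ i, 2 * (z i : ℝ) ≤ nR * x i + 1 := by
        intro i
        rcases max_cases (-(L:ℤ)) ⌈(nR * x i - 1)/2⌉ with ⟨hm, _⟩ | ⟨hm, _⟩
        · -- z i = -L
          have hx := h1 i
          have heq : (z i : ℝ) = -(L:ℝ) := by simp only [hz]; rw [hm]; push_cast; ring
          rw [heq, hnR]
          nlinarith
        · -- z i = ceil
          have heq : (z i : ℝ) = ((⌈(nR * x i - 1)/2⌉ : ℤ) : ℝ) := by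
            simp only [hz]; rw [hm]
          have hcc := Int.ceil_lt_add_one ((nR * x i - 1)/2)
          rw [heq]
          linarith
      refine ⟨fun i => ((z i : ℤ) : ZMod (2*L+1)), ?_⟩
      have hval : ∀ i, (((z i : ℤ) : ZMod (2*L+1))).valMinAbs = z i := by
        intro i
        refine (ZMod.valMinAbs_spec _ _).2 ⟨rfl, ?_⟩
        constructor
        · have := hzge i; push_cast; omega
        · have := hzle i; push_cast; omega
      constructor
      · intro i
        rw [hval i, div_le_iff₀ hnR0]
        have := hzlo i
        linarith [mul_comm (x i) nR]
      · intro i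
        rw [hval i, le_div_iff₀ hnR0]
        have := hzup i
        linarith [mul_comm (x i) nR]
  -- pairwise a.e. disjointness of the cubes
  have hdisj : Pairwise (Function.onFun (AEDisjoint volume) Q) := by
    intro a b hab
    obtain ⟨i₀, hi₀⟩ : ∃ i, a i ≠ b i := Function.ne_iff.1 hab
    have hJne : (a i₀).valMinAbs ≠ (b i₀).valMinAbs :=
      fun h => hi₀ (ZMod.injective_valMinAbs h)
    show volume (Q a ∩ Q b) = 0
    rw [hQ]
    simp only
    rw [Set.Icc_inter_Icc, Real.volume_Icc_pi]
    refine Finset.prod_eq_zero (Finset.mem_univ i₀) ?_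
    rw [ENNReal.ofReal_eq_zero]
    simp only [Pi.inf_apply, Pi.sup_apply]
    rw [sub_nonpos]
    rcases lt_or_gt_of_ne hJne with h | h
    · have hle : ((a i₀).valMinAbs : ℝ) + 1 ≤ ((b i₀).valMinAbs : ℝ) := by
        exact_mod_cast Int.lt_iff_add_one_le.1 h
      have hd : (2*((a i₀).valMinAbs : ℝ) + 1)/nR ≤ (2*((b i₀).valMinAbs : ℝ) - 1)/nR :=
        div_le_div_of_nonneg_right (by linarith) hnR0.le
      calc min ((2*((a i₀).valMinAbs : ℝ) + 1)/nR) ((2*((b i₀).valMinAbs : ℝ) + 1)/nR)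
          ≤ (2*((a i₀).valMinAbs : ℝ) + 1)/nR := min_le_left _ _
        _ ≤ (2*((b i₀).valMinAbs : ℝ) - 1)/nR := hd
        _ ≤ max ((2*((a i₀).valMinAbs : ℝ) - 1)/nR) ((2*((b i₀).valMinAbs : ℝ) - 1)/nR) :=
            le_max_right _ _
    · have hle : ((b i₀).valMinAbs : ℝ) + 1 ≤ ((a i₀).valMinAbs : ℝ) := by
        exact_mod_cast Int.lt_iff_add_one_le.1 h
      have hd : (2*((b i₀).valMinAbs : ℝ) + 1)/nR ≤ (2*((a i₀).valMinAbs : ℝ) - 1)/nR :=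
        div_le_div_of_nonneg_right (by linarith) hnR0.le
      calc min ((2*((a i₀).valMinAbs : ℝ) + 1)/nR) ((2*((b i₀).valMinAbs : ℝ) + 1)/nR)
          ≤ (2*((b i₀).valMinAbs : ℝ) + 1)/nR := min_le_right _ _
        _ ≤ (2*((a i₀).valMinAbs : ℝ) - 1)/nR := hd
        _ ≤ max ((2*((a i₀).valMinAbs : ℝ) - 1)/nR) ((2*((b i₀).valMinAbs : ℝ) - 1)/nR) :=
            le_max_left _ _
  -- integrability
  have hcont : Continuous f := f_cont hε
  have hintBig : IntegrableOn f (Set.Icc (fun _ => (-1:ℝ)) (fun _ => (1:ℝ))) volume :=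
    hcont.continuousOn.integrableOn_compact isCompact_Icc
  have hintQ : ∀ a, IntegrableOn f (Q a) volume := fun a => by
    rw [hQ]; exact hcont.continuousOn.integrableOn_compact isCompact_Icc
  -- per-cube error estimate
  have hDpos : 0 ≤ D := by rw [hD]; positivity
  have herr : ∀ a, |(∫ x in Q a, f x) - (2/nR)^3 * f (dualPt L a)| ≤ (2/nR)^3 * D := by
    intro a
    have hpt : ∀ x ∈ Q a, |f x - f (dualPt L a)| ≤ D := by
      intro x hx
      rw [hQ] at hx
      simp only [Set.mem_Icc, Pi.le_def] at hx
      have hco : ∀ i, |x i - dualPt L a i| ≤ 1/(L:ℝ) := by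
        intro i
        have hxl := hx.1 i
        have hxu := hx.2 i
        have hjl := (hJb (a i)).1
        have hju := (hJb (a i)).2
        have hlo : ((a i).valMinAbs : ℝ)/L - 1/L ≤ (2*((a i).valMinAbs:ℝ) - 1)/nR := by
          rw [div_sub_div_same, div_le_div_iff₀ hL0 hnR0, hnR]
          nlinarith
        have hhi : (2*((a i).valMinAbs:ℝ) + 1)/nR ≤ ((a i).valMinAbs:ℝ)/L + 1/L := by
          rw [← add_div, div_le_div_iff₀ hnR0 hL0, hnR]
          nlinarith
        have hdp : dualPt L a i = ((a i).valMinAbs : ℝ)/L := rfl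
        rw [hdp, abs_le]
        constructor <;> linarith
      have h1 := inv_sqrt_lip hε α (eD x) (eD (dualPt L a))
      have h2 := eD_lip x (dualPt L a)
      have h3 : ∑ i, |x i - dualPt L a i| ≤ 3 * (1/(L:ℝ)) := by
        calc ∑ i, |x i - dualPt L a i| ≤ ∑ _i : Fin 3, 1/(L:ℝ) :=
              Finset.sum_le_sum fun i _ => hco i
          _ = 3 * (1/(L:ℝ)) := by
              rw [Finset.sum_const, Finset.card_univ]
              simp [nsmul_eq_mul]
      calc |f x - f (dualPt L a)| ≤ ε⁻¹ * ε⁻¹ * |eD x - eD (dualPt L a)| := h1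
        _ ≤ D := by
            rw [hD]
            have hee : |eD x - eD (dualPt L a)| ≤ 8 * (3/(L:ℝ)) := by
              refine h2.trans ?_
              have : (3:ℝ) * (1/(L:ℝ)) = 3/(L:ℝ) := by ring
              rw [← this] at *
              nlinarith
            have hpos : (0:ℝ) ≤ ε⁻¹ * ε⁻¹ := by positivity
            calc ε⁻¹ * ε⁻¹ * |eD x - eD (dualPt L a)| ≤ ε⁻¹ * ε⁻¹ * (8 * (3/(L:ℝ))) :=
                  mul_le_mul_of_nonneg_left hee hpos
              _ = ε⁻¹ * ε⁻¹ * (8 * (3/(L:ℝ))) := rfl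
    have hQfin : volume (Q a) < ⊤ := by
      rw [hQ]; exact (isCompact_Icc).measure_lt_top
    have hconst : ∫ _x in Q a, f (dualPt L a) ∂volume = (2/nR)^3 * f (dualPt L a) := by
      rw [setIntegral_const, measureReal_def, hQvol a, smul_eq_mul]
    have hsub : (∫ x in Q a, f x) - (2/nR)^3 * f (dualPt L a)
        = ∫ x in Q a, (f x - f (dualPt L a)) := by
      rw [integral_sub (hintQ a) (integrableOn_const hQfin.ne), hconst]
    rw [hsub, ← Real.norm_eq_abs]
    have hmeas : AEStronglyMeasurable (fun x => f x - f (dualPt L a))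
        (volume.restrict (Q a)) :=
      (hcont.sub continuous_const).aestronglyMeasurable
    have := norm_setIntegral_le_of_norm_le_const (C := D) hQfin
      (fun x hx => by rw [Real.norm_eq_abs]; exact hpt x hx)
    refine this.trans ?_
    rw [measureReal_def, hQvol a, mul_comm]
  -- decomposition of the integral over [-1,1]^3
  have hsum : ∫ x in Set.Icc (fun _ => (-1:ℝ)) (fun _ => (1:ℝ)), f x
      = ∑ a : Fin 3 → ZMod (2*L+1), ∫ x in Q a, f x := by
    rw [← hUnion, integral_iUnion_ae
      (fun a => by rw [hQ]; exact measurableSet_Icc.nullMeasurableSet) hdisj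
      (hUnion ▸ hintBig), tsum_fintype]
  -- periodicity: the integral over [-1,1]^3 is 8 times the integral over the cell
  have hper8 : ∫ x in Set.Icc (fun _ => (-1:ℝ)) (fun _ => (1:ℝ)), f x
      = 8 * ∫ k in cell, f k := by
    have hper : ∀ (x : Fin 3 → ℝ) (m : Fin 3 → ℤ), f (x + fun i => (m i : ℝ)) = f x := by
      intro x m
      simp only [hf]
      rw [eD_add_int]
    exact int_neg_one_one f hcont hper
  -- cardinality
  have hcard : ((Fintype.card (Fin 3 → ZMod (2*L+1)) : ℕ) : ℝ) = nR^3 := by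
    rw [Fintype.card_fun, ZMod.card, Fintype.card_fin, hnR]
    push_cast
    ring
  -- assembly
  have hmain : |(∑ a : Fin 3 → ZMod (2*L+1), (2/nR)^3 * f (dualPt L a))
      - 8 * ∫ k in cell, f k| ≤ 8 * D := by
    rw [← hper8, hsum, ← Finset.sum_sub_distrib]
    refine (Finset.abs_sum_le_sum_abs _ _).trans ?_
    have hb : ∀ a ∈ (Finset.univ : Finset (Fin 3 → ZMod (2*L+1))),
        |(2/nR)^3 * f (dualPt L a) - ∫ x in Q a, f x| ≤ (2/nR)^3 * D := by
      intro a _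
      rw [abs_sub_comm]
      exact herr a
    refine (Finset.sum_le_sum hb).trans ?_
    rw [Finset.sum_const, Finset.card_univ, nsmul_eq_mul, hcard]
    have hne : nR^3 ≠ 0 := by positivity
    refine le_of_eq ?_
    calc nR^3 * ((2/nR)^3 * D) = (2^3) * D * (nR^3 / nR^3) := by rw [div_pow]; ring
      _ = 8 * D := by rw [div_self hne]; norm_num
  have hfactor : (∑ a : Fin 3 → ZMod (2*L+1), (2/nR)^3 * f (dualPt L a))
      = 8 * ((nR^3)⁻¹ * ∑ a : Fin 3 → ZMod (2*L+1), f (dualPt L a)) := by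
    have h28 : (2/nR)^3 = 8 * (nR^3)⁻¹ := by
      rw [div_pow, div_eq_mul_inv]
      norm_num
    rw [← Finset.mul_sum, h28, mul_assoc]
  rw [hfactor] at hmain
  rw [← mul_sub, abs_mul, abs_of_pos (by norm_num : (0:ℝ) < 8)] at hmain
  have hfin : |(nR^3)⁻¹ * (∑ a : Fin 3 → ZMod (2*L+1), f (dualPt L a))
      - ∫ k in cell, f k| ≤ D := by linarith
  have hDval : D = 24 / (ε^2 * L) := by
    rw [hD]
    field_simp [hε.ne', hL0.ne']
    ring
  rw [hDval] at hfin
  exact hfin
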